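/- The complete graph K_4 admits no equitable neighbour-sum-distinguishing edge 3-colouring; together with the existence of an equitable nsd edge 4-colouring of K_4, this shows that the equitable nsd-index of K_4 equals 4. -/

import Mathlib

open Finset

variable {V : Type*} [Fintype V] [DecidableEq V]

/-- The vertex sum at `v` induced by an edge colouring `γ`:
the sum of the colours of the edges incident with `v`. -/
def vSum (G : SimpleGraph V) [DecidableRel G.Adj] (γ : Sym2 V → ℕ) (v : V) : ℕ :=
  ∑ u ∈ G.neighborFinset v, γ s(v, u)

/-- `γ` is an edge `k`-colouring: every edge gets a colour in `{1, …, k}`. -/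
def IsEdgeKColoring (G : SimpleGraph V) (k : ℕ) (γ : Sym2 V → ℕ) : Prop :=
  ∀ e ∈ G.edgeSet, 1 ≤ γ e ∧ γ e ≤ k

/-- `γ` is a neighbour-sum-distinguishing edge colouring. -/
def NsdEdge (G : SimpleGraph V) [DecidableRel G.Adj] (γ : Sym2 V → ℕ) : Prop :=
  ∀ ⦃u v : V⦄, G.Adj u v → vSum G γ u ≠ vSum G γ v

/-- The number of edges of `G` coloured `i` by `γ`. -/
def edgeClassCard (G : SimpleGraph V) [DecidableRel G.Adj] (γ : Sym2 V → ℕ) (i : ℕ) : ℕ :=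
  (G.edgeFinset.filter fun e => γ e = i).card

/-- `γ` is equitable as an edge `k`-colouring: any two colour classes among
`{1, …, k}` have sizes differing by at most one. -/
def EquitableEdge (G : SimpleGraph V) [DecidableRel G.Adj] (k : ℕ) (γ : Sym2 V → ℕ) : Prop :=
  ∀ i ∈ Finset.Icc 1 k, ∀ j ∈ Finset.Icc 1 k,
    edgeClassCard G γ i ≤ edgeClassCard G γ j + 1

/-- `G` admits an equitable neighbour-sum-distinguishing edge `k`-colouring. -/
def HasEqNsdEdge (G : SimpleGraph V) [DecidableRel G.Adj] (k : ℕ) : Prop :=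
  ∃ γ : Sym2 V → ℕ, IsEdgeKColoring G k γ ∧ NsdEdge G γ ∧ EquitableEdge G k γ

instance {W : Type*} [DecidableEq W] : DecidableRel (SimpleGraph.completeGraph W).Adj := fun a b =>
  inferInstanceAs (Decidable (a ≠ b))

/- ### Auxiliary material -/

/-- Count of occurrences of `i` among six values. -/
def cnt6 (a b c d e f i : ℕ) : ℕ :=
  (if a = i then 1 else 0) + ((if b = i then 1 else 0) + ((if c = i then 1 else 0) +
  ((if d = i then 1 else 0) + ((if e = i then 1 else 0) + (if f = i then 1 else 0)))))

lemma no3 : ∀ a ∈ Finset.Icc 1 3, ∀ b ∈ Finset.Icc 1 3, ∀ c ∈ Finset.Icc 1 3,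
    ∀ d ∈ Finset.Icc 1 3, ∀ e ∈ Finset.Icc 1 3, ∀ f ∈ Finset.Icc 1 3,
    ¬ (a + (b + c) ≠ a + (d + e) ∧ a + (b + c) ≠ b + (d + f) ∧ a + (b + c) ≠ c + (e + f) ∧
       a + (d + e) ≠ b + (d + f) ∧ a + (d + e) ≠ c + (e + f) ∧ b + (d + f) ≠ c + (e + f) ∧
       ∀ i ∈ Finset.Icc 1 3, ∀ j ∈ Finset.Icc 1 3,
         cnt6 a b c d e f i ≤ cnt6 a b c d e f j + 1) := by
  decide

lemma no2 : ∀ a ∈ Finset.Icc 1 2, ∀ b ∈ Finset.Icc 1 2, ∀ c ∈ Finset.Icc 1 2,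
    ∀ d ∈ Finset.Icc 1 2, ∀ e ∈ Finset.Icc 1 2, ∀ f ∈ Finset.Icc 1 2,
    ¬ (a + (b + c) ≠ a + (d + e) ∧ a + (b + c) ≠ b + (d + f) ∧ a + (b + c) ≠ c + (e + f) ∧
       a + (d + e) ≠ b + (d + f) ∧ a + (d + e) ≠ c + (e + f) ∧ b + (d + f) ≠ c + (e + f)) := by
  decide

lemma edgeFinset_K4 : (SimpleGraph.completeGraph (Fin 4)).edgeFinset =
    ({s(0,1), s(0,2), s(0,3), s(1,2), s(1,3), s(2,3)} : Finset (Sym2 (Fin 4))) := by decide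

lemma vSum0 (γ : Sym2 (Fin 4) → ℕ) :
    vSum (SimpleGraph.completeGraph (Fin 4)) γ 0 = γ s(0,1) + (γ s(0,2) + γ s(0,3)) := by
  rw [vSum, show (SimpleGraph.completeGraph (Fin 4)).neighborFinset 0 = {1,2,3} from by decide,
    Finset.sum_insert (by decide), Finset.sum_insert (by decide), Finset.sum_singleton]

lemma vSum1 (γ : Sym2 (Fin 4) → ℕ) :
    vSum (SimpleGraph.completeGraph (Fin 4)) γ 1 = γ s(0,1) + (γ s(1,2) + γ s(1,3)) := by
  rw [vSum, show (SimpleGraph.completeGraph (Fin 4)).neighborFinset 1 = {0,2,3} from by decide,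
    Finset.sum_insert (by decide), Finset.sum_insert (by decide), Finset.sum_singleton,
    show s((1:Fin 4),0) = s(0,1) from by decide]

lemma vSum2 (γ : Sym2 (Fin 4) → ℕ) :
    vSum (SimpleGraph.completeGraph (Fin 4)) γ 2 = γ s(0,2) + (γ s(1,2) + γ s(2,3)) := by
  rw [vSum, show (SimpleGraph.completeGraph (Fin 4)).neighborFinset 2 = {0,1,3} from by decide,
    Finset.sum_insert (by decide), Finset.sum_insert (by decide), Finset.sum_singleton,
    show s((2:Fin 4),0) = s(0,2) from by decide, show s((2:Fin 4),1) = s(1,2) from by decide]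

lemma vSum3 (γ : Sym2 (Fin 4) → ℕ) :
    vSum (SimpleGraph.completeGraph (Fin 4)) γ 3 = γ s(0,3) + (γ s(1,3) + γ s(2,3)) := by
  rw [vSum, show (SimpleGraph.completeGraph (Fin 4)).neighborFinset 3 = {0,1,2} from by decide,
    Finset.sum_insert (by decide), Finset.sum_insert (by decide), Finset.sum_singleton,
    show s((3:Fin 4),0) = s(0,3) from by decide, show s((3:Fin 4),1) = s(1,3) from by decide,
    show s((3:Fin 4),2) = s(2,3) from by decide]

lemma ecc_K4 (γ : Sym2 (Fin 4) → ℕ) (i : ℕ) :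
    edgeClassCard (SimpleGraph.completeGraph (Fin 4)) γ i =
      cnt6 (γ s(0,1)) (γ s(0,2)) (γ s(0,3)) (γ s(1,2)) (γ s(1,3)) (γ s(2,3)) i := by
  rw [edgeClassCard, edgeFinset_K4, Finset.card_filter,
    Finset.sum_insert (by decide), Finset.sum_insert (by decide),
    Finset.sum_insert (by decide), Finset.sum_insert (by decide),
    Finset.sum_insert (by decide), Finset.sum_singleton]
  rfl

lemma mem_edge01 : s((0:Fin 4),1) ∈ (SimpleGraph.completeGraph (Fin 4)).edgeSet :=
  (SimpleGraph.completeGraph (Fin 4)).mem_edgeSet.2 (by decide)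
lemma mem_edge02 : s((0:Fin 4),2) ∈ (SimpleGraph.completeGraph (Fin 4)).edgeSet :=
  (SimpleGraph.completeGraph (Fin 4)).mem_edgeSet.2 (by decide)
lemma mem_edge03 : s((0:Fin 4),3) ∈ (SimpleGraph.completeGraph (Fin 4)).edgeSet :=
  (SimpleGraph.completeGraph (Fin 4)).mem_edgeSet.2 (by decide)
lemma mem_edge12 : s((1:Fin 4),2) ∈ (SimpleGraph.completeGraph (Fin 4)).edgeSet :=
  (SimpleGraph.completeGraph (Fin 4)).mem_edgeSet.2 (by decide)
lemma mem_edge13 : s((1:Fin 4),3) ∈ (SimpleGraph.completeGraph (Fin 4)).edgeSet :=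
  (SimpleGraph.completeGraph (Fin 4)).mem_edgeSet.2 (by decide)
lemma mem_edge23 : s((2:Fin 4),3) ∈ (SimpleGraph.completeGraph (Fin 4)).edgeSet :=
  (SimpleGraph.completeGraph (Fin 4)).mem_edgeSet.2 (by decide)

/-- An explicit equitable nsd edge 4-colouring of `K₄`. -/
def gamma4 : Sym2 (Fin 4) → ℕ := fun e =>
  if e = s(0,1) then 1 else if e = s(0,2) then 2 else if e = s(0,3) then 3 else
  if e = s(1,2) then 4 else if e = s(1,3) then 2 else 4

lemma has4 : HasEqNsdEdge (SimpleGraph.completeGraph (Fin 4)) 4 := by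
  refine ⟨gamma4, ?_, ?_, ?_⟩
  · intro e he
    induction e using Sym2.ind with
    | _ u v =>
      rw [SimpleGraph.mem_edgeSet] at he
      revert he; revert v; revert u; decide
  · intro u v h
    revert h; revert v; revert u; decide
  · intro i hi j hj
    rw [Finset.mem_Icc] at hi hj
    obtain ⟨hi1, hi2⟩ := hi
    obtain ⟨hj1, hj2⟩ := hj
    interval_cases i <;> interval_cases j <;> decide

/-- No equitable nsd edge `k`-colouring of `K₄` for `k ≤ 3`. -/
lemma no_small (k : ℕ) (hk : k ≤ 3) : ¬ HasEqNsdEdge (SimpleGraph.completeGraph (Fin 4)) k := by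
  rintro ⟨γ, hcol, hnsd, heq⟩
  have ha := hcol _ mem_edge01
  have hb := hcol _ mem_edge02
  have hc := hcol _ mem_edge03
  have hd := hcol _ mem_edge12
  have he := hcol _ mem_edge13
  have hf := hcol _ mem_edge23
  have h01 := hnsd (show (SimpleGraph.completeGraph (Fin 4)).Adj 0 1 from by decide)
  have h02 := hnsd (show (SimpleGraph.completeGraph (Fin 4)).Adj 0 2 from by decide)
  have h03 := hnsd (show (SimpleGraph.completeGraph (Fin 4)).Adj 0 3 from by decide)
  have h12 := hnsd (show (SimpleGraph.completeGraph (Fin 4)).Adj 1 2 from by decide)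
  have h13 := hnsd (show (SimpleGraph.completeGraph (Fin 4)).Adj 1 3 from by decide)
  have h23 := hnsd (show (SimpleGraph.completeGraph (Fin 4)).Adj 2 3 from by decide)
  rw [vSum0, vSum1] at h01
  rw [vSum0, vSum2] at h02
  rw [vSum0, vSum3] at h03
  rw [vSum1, vSum2] at h12
  rw [vSum1, vSum3] at h13
  rw [vSum2, vSum3] at h23
  rcases Nat.lt_or_ge k 3 with hk2 | hk3
  · -- k ≤ 2 : already the nsd condition fails
    have hk2' : k ≤ 2 := Nat.lt_succ_iff.mp hk2
    have mem : ∀ {x : ℕ}, 1 ≤ x → x ≤ k → x ∈ Finset.Icc 1 2 := fun h1 h2 =>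
      Finset.mem_Icc.2 ⟨h1, le_trans h2 hk2'⟩
    exact no2 _ (mem ha.1 ha.2) _ (mem hb.1 hb.2) _ (mem hc.1 hc.2) _ (mem hd.1 hd.2)
      _ (mem he.1 he.2) _ (mem hf.1 hf.2) ⟨h01, h02, h03, h12, h13, h23⟩
  · have hk3' : k = 3 := le_antisymm hk hk3
    subst hk3'
    have mem : ∀ {x : ℕ}, 1 ≤ x → x ≤ 3 → x ∈ Finset.Icc 1 3 := fun h1 h2 =>
      Finset.mem_Icc.2 ⟨h1, h2⟩
    refine no3 _ (mem ha.1 ha.2) _ (mem hb.1 hb.2) _ (mem hc.1 hc.2) _ (mem hd.1 hd.2)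
      _ (mem he.1 he.2) _ (mem hf.1 hf.2) ⟨h01, h02, h03, h12, h13, h23, ?_⟩
    intro i hi j hj
    have := heq i hi j hj
    rwa [ecc_K4, ecc_K4] at this

/-- `K_4` admits no equitable neighbour-sum-distinguishing edge `3`-colouring,
but admits an equitable nsd edge `4`-colouring; hence its equitable nsd-index is `4`. -/
theorem completeGraph_four_equitable_nsd_index :
    ¬ HasEqNsdEdge (SimpleGraph.completeGraph (Fin 4)) 3 ∧
    HasEqNsdEdge (SimpleGraph.completeGraph (Fin 4)) 4 ∧
    IsLeast {k : ℕ | HasEqNsdEdge (SimpleGraph.completeGraph (Fin 4)) k} 4 := by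
  refine ⟨no_small 3 le_rfl, has4, has4, ?_⟩
  intro k hk
  by_contra h
  exact no_small k (by omega) hk
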